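/- For a connected orthogonal convex shape S, the function x ↦ y_max(x) (the maximum y-coordinate of column c_x, over nonempty columns) is unimodal: there do not exist columns x1 < x2 < x3, all nonempty, with y_max(x1) > y_max(x2) and y_max(x3) > y_max(x2). -/
import Mathlib


def Adjacent (p q : ℤ × ℤ) : Prop :=
  (p.1 = q.1 ∧ (p.2 = q.2 + 1 ∨ q.2 = p.2 + 1)) ∨
  (p.2 = q.2 ∧ (p.1 = q.1 + 1 ∨ q.1 = p.1 + 1))

def ShapeConnected (S : Finset (ℤ × ℤ)) : Prop :=
  ∀ p ∈ S, ∀ q ∈ S,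
    Relation.ReflTransGen (fun a b => a ∈ S ∧ b ∈ S ∧ Adjacent a b) p q

def OrthoConvex (S : Finset (ℤ × ℤ)) : Prop :=
  (∀ p ∈ S, ∀ q ∈ S, p.1 = q.1 → ∀ y : ℤ,
      min p.2 q.2 < y → y < max p.2 q.2 → (p.1, y) ∈ S) ∧
  (∀ p ∈ S, ∀ q ∈ S, p.2 = q.2 → ∀ x : ℤ,
      min p.1 q.1 < x → x < max p.1 q.1 → (x, p.2) ∈ S)


/-- The set of y-coordinates of the column of `S` at abscissa `x`. -/
def col (S : Finset (ℤ × ℤ)) (x : ℤ) : Finset ℤ :=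
  (S.filter (fun p => p.1 = x)).image Prod.snd

lemma mem_col {S : Finset (ℤ × ℤ)} {x y : ℤ} : y ∈ col S x ↔ (x, y) ∈ S := by
  simp only [col, Finset.mem_image, Finset.mem_filter]
  constructor
  · rintro ⟨⟨a, b⟩, ⟨hp, hx⟩, hy⟩
    simp_all
  · intro h; exact ⟨(x, y), ⟨h, rfl⟩, rfl⟩

lemma find_left (S : Finset (ℤ × ℤ)) (x₂ m₂ : ℤ)
    (H : ∀ y : ℤ, (x₂, y) ∈ S → y ≤ m₂) :
    ∀ p q : ℤ × ℤ, Relation.ReflTransGen (fun a b => a ∈ S ∧ b ∈ S ∧ Adjacent a b) p q →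
      p.1 < x₂ → m₂ < p.2 → p ∈ S → x₂ < q.1 →
      ∃ a ∈ S, a.1 < x₂ ∧ a.2 = m₂ + 1 := by
  intro p q hpq
  induction hpq using Relation.ReflTransGen.head_induction_on with
  | refl => intro h1 _ _ h4; omega
  | @head p p' hstep htail ih =>
    intro hx hy hpS hq
    obtain ⟨_, hp'S, hadj⟩ := hstep
    rcases hadj with ⟨heq, hv⟩ | ⟨heq, hh⟩
    · by_cases h : m₂ < p'.2
      · exact ih (by omega) h hp'S hq
      · exact ⟨p, hpS, hx, by omega⟩
    · by_cases h : p'.1 < x₂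
      · exact ih h (by omega) hp'S hq
      · have hx2 : p'.1 = x₂ := by omega
        have hmem : (x₂, p'.2) ∈ S := by rw [← hx2]; exact hp'S
        have := H p'.2 hmem
        omega

lemma find_right (S : Finset (ℤ × ℤ)) (x₂ m₂ : ℤ)
    (H : ∀ y : ℤ, (x₂, y) ∈ S → y ≤ m₂) :
    ∀ p q : ℤ × ℤ, Relation.ReflTransGen (fun a b => a ∈ S ∧ b ∈ S ∧ Adjacent a b) p q →
      x₂ < p.1 → m₂ < p.2 → p ∈ S → q.1 < x₂ →
      ∃ a ∈ S, x₂ < a.1 ∧ a.2 = m₂ + 1 := by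
  intro p q hpq
  induction hpq using Relation.ReflTransGen.head_induction_on with
  | refl => intro h1 _ _ h4; omega
  | @head p p' hstep htail ih =>
    intro hx hy hpS hq
    obtain ⟨_, hp'S, hadj⟩ := hstep
    rcases hadj with ⟨heq, hv⟩ | ⟨heq, hh⟩
    · by_cases h : m₂ < p'.2
      · exact ih (by omega) h hp'S hq
      · exact ⟨p, hpS, hx, by omega⟩
    · by_cases h : x₂ < p'.1
      · exact ih h (by omega) hp'S hq
      · have hx2 : p'.1 = x₂ := by omega
        have hmem : (x₂, p'.2) ∈ S := by rw [← hx2]; exact hp'S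
        have := H p'.2 hmem
        omega

/-- The column maxima of a connected orthogonal convex shape are unimodal. -/
theorem stmt2 (S : Finset (ℤ × ℤ)) (hc : ShapeConnected S) (ho : OrthoConvex S) :
    ¬ ∃ (x₁ x₂ x₃ : ℤ) (h₁ : (col S x₁).Nonempty) (h₂ : (col S x₂).Nonempty)
        (h₃ : (col S x₃).Nonempty),
      x₁ < x₂ ∧ x₂ < x₃ ∧
      (col S x₂).max' h₂ < (col S x₁).max' h₁ ∧
      (col S x₂).max' h₂ < (col S x₃).max' h₃ := by
  rintro ⟨x₁, x₂, x₃, h₁, h₂, h₃, h12, h23, hm1, hm3⟩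
  set m₂ := (col S x₂).max' h₂ with hm₂
  have H : ∀ y : ℤ, (x₂, y) ∈ S → y ≤ m₂ := fun y hy =>
    Finset.le_max' _ _ (mem_col.mpr hy)
  have hp1 : (x₁, (col S x₁).max' h₁) ∈ S := mem_col.mp (Finset.max'_mem _ _)
  have hp3 : (x₃, (col S x₃).max' h₃) ∈ S := mem_col.mp (Finset.max'_mem _ _)
  obtain ⟨a, haS, hax, hay⟩ :=
    find_left S x₂ m₂ H _ _ (hc _ hp1 _ hp3) h12 hm1 hp1 h23
  obtain ⟨b, hbS, hbx, hby⟩ :=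
    find_right S x₂ m₂ H _ _ (hc _ hp3 _ hp1) h23 hm3 hp3 h12
  have hmem : (x₂, a.2) ∈ S :=
    ho.2 a haS b hbS (by omega) x₂ (by omega) (by omega)
  have := H a.2 hmem
  omega
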